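/- The matrix-product form of mutation agrees with the entrywise formula: with E and F defined from B̃ and k as below, the matrix E·B̃·F has entries (E B̃ F)_{ij} = −b_{ij} if i = k or j = k, and (E B̃ F)_{ij} = b_{ij} + (−1)^{δ(b_{ik}<0)} max(b_{ik} b_{kj}, 0) otherwise. -/
import Mathlib


/-- the matrix-product form of mutation `E·B̃·F` agrees with the
entrywise mutation formula. -/
theorem mutation_matrix_form {K : Type*} [Fintype K] [DecidableEq K] (ex : Finset K)
    (B : K → K → ℤ) (k : K) (hk : k ∈ ex)
    (hskew : ∀ i ∈ ex, ∀ j ∈ ex, B i j = - B j i)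
    (E F : K → K → ℤ)
    (hE : ∀ i j, E i j = if j ≠ k then (if i = j then 1 else 0)
        else if i = k then -1 else max 0 (- B i k))
    (hF : ∀ i j, F i j = if i ≠ k then (if i = j then 1 else 0)
        else if j = k then -1 else max 0 (B k j)) :
    ∀ (i : K), ∀ j ∈ ex,
      (∑ u : K, ∑ w ∈ ex, E i u * B u w * F w j)
        = if i = k ∨ j = k then - B i j
          else B i j + (if B i k < 0 then -1 else 1) * max (B i k * B k j) 0 := by
  intro i j hj
  have hkk : B k k = 0 := by have := hskew k hk k hk; omega
  rw [Finset.sum_comm]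
  -- inner sum over u
  have hinner : ∀ w, (∑ u : K, E i u * B u w * F w j)
      = (if i = k then -B k w else B i w + max 0 (-B i k) * B k w) * F w j := by
    intro w
    rw [← Finset.sum_mul]
    congr 1
    rcases eq_or_ne i k with hi | hi
    · rw [Fintype.sum_eq_single k (fun u hu => by simp [hE, hu, hi, (Ne.symm hu)])]
      simp [hE, hi]
    · rw [Fintype.sum_eq_add i k hi (fun u hu => by simp [hE, hu.2, (Ne.symm hu.1)])]
      simp [hE, hi]
  simp only [hinner]
  set A : K → ℤ := fun w => if i = k then -B k w else B i w + max 0 (-B i k) * B k w with hA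
  rcases eq_or_ne j k with hjk | hjk
  · subst hjk
    rw [Finset.sum_eq_single_of_mem j hk (fun w hw hwj => by simp [hF, hwj])]
    simp only [hF, if_pos rfl]
    simp only [ite_not, if_pos rfl]
    rcases eq_or_ne i j with hij | hij <;> simp [hA, hij, hkk]
  · rw [Finset.sum_eq_sum_sdiff_singleton_add hk]
    rw [Finset.sum_eq_single_of_mem j (Finset.mem_sdiff.2 ⟨hj, by simp [hjk]⟩)
      (fun w hw hwj => by
        have hwk : w ≠ k := (Finset.mem_sdiff.1 hw).2 ∘ (by simp [·])
        simp [hF, hwk, hwj])]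
    have hFj : F j j = 1 := by simp [hF, hjk]
    have hFk : F k j = max 0 (B k j) := by simp [hF, hjk]
    rw [hFj, hFk]
    rcases eq_or_ne i k with hik | hik
    · simp [hA, hik, hkk]
    · simp only [hA, if_neg hik, hik, hjk, or_self, if_neg, false_or, hkk, mul_zero,
        add_zero, mul_one]
      rcases lt_or_ge (B i k) 0 with h1 | h1 <;> rcases le_or_gt (B k j) 0 with h2 | h2
      · rw [if_pos h1, max_eq_right (by linarith : (0:ℤ) ≤ -B i k),
          max_eq_left h2, max_eq_left (by nlinarith : (0:ℤ) ≤ B i k * B k j)]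
        simp only [if_false]; ring
      · rw [if_pos h1, max_eq_right (by linarith : (0:ℤ) ≤ -B i k),
          max_eq_right h2.le, max_eq_right (by nlinarith : B i k * B k j ≤ (0:ℤ))]
        simp only [if_false]; ring
      · rw [if_neg (not_lt.2 h1), max_eq_left (by linarith : -B i k ≤ (0:ℤ)),
          max_eq_left h2, max_eq_right (by nlinarith : B i k * B k j ≤ (0:ℤ))]
        simp only [if_false]; ring
      · rw [if_neg (not_lt.2 h1), max_eq_left (by linarith : -B i k ≤ (0:ℤ)),
          max_eq_right h2.le, max_eq_left (by nlinarith : (0:ℤ) ≤ B i k * B k j)]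
        simp only [if_false]; ring
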